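/- Let (P, μ) be a measure space, and let x : ℝ → P → ℝ be a parameterized family of real-valued functions, with partition function Z(θ) = ∫ exp(x(θ, p)) dμ(p) and normalized log-likelihood L(θ, p*) = x(θ, p*) − log Z(θ) at a fixed point p* ∈ P. Suppose there is a parameter value θ₀ and a radius ε > 0 such that: (i) for each θ in the ball of radius ε around θ₀, the function p ↦ exp(x(θ, p)) is μ-integrable; (ii) for μ-almost every p, the map θ ↦ x(θ, p) is differentiable at every θ in that ball with derivative ∂x/∂θ(θ, p); (iii) there is a μ-integrable function g : P → ℝ with |∂x/∂θ(θ, p) · exp(x(θ, p))| ≤ g(p) for all θ in the ball and μ-almost every p; (iv) the map p ↦ ∂x/∂θ(θ₀, p) · exp(x(θ₀, p)) is μ-measurable; (v) Z(θ₀) > 0; and (vi) the map θ ↦ x(θ, p*) is differentiable at θ₀. Then θ ↦ L(θ, p*) is differentiable at θ₀ with derivative ∂x/∂θ(θ₀, p*) − ∫ ∂x/∂θ(θ₀, p) · q̂(p) dμ(p), where q̂(p) = exp(x(θ₀, p)) / Z(θ₀). -/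

import Mathlib

open MeasureTheory Real Filter Topology

theorem aux_sigmaFinite {P : Type*} [MeasurableSpace P] {μ : Measure P} {f : P → ℝ}
    (hf : Integrable f μ) (hpos : ∀ p, 0 < f p) : SigmaFinite μ := by
  obtain ⟨f', hf'm, hff'⟩ := hf.aestronglyMeasurable
  have hNnull : μ (toMeasurable μ {p | f p ≠ f' p}) = 0 := by
    rw [measure_toMeasurable]; exact hff'
  have hf'int : Integrable f' μ := hf.congr hff'
  refine ⟨⟨{ set := fun n => {p | 1/(n+1) ≤ f' p} ∪ toMeasurable μ {p | f p ≠ f' p}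
           , set_mem := fun _ => trivial
           , finite := ?_
           , spanning := ?_ }⟩⟩
  · intro n
    refine lt_of_le_of_lt (measure_union_le _ _) ?_
    rw [hNnull, add_zero]
    exact hf'int.measure_ge_lt_top (by positivity)
  · refine Set.eq_univ_of_forall fun p => ?_
    by_cases hp : f p = f' p
    · obtain ⟨n, hn⟩ := exists_nat_one_div_lt (show (0:ℝ) < f' p from hp ▸ hpos p)
      refine Set.mem_iUnion.2 ⟨n, Or.inl ?_⟩
      show 1/((n:ℝ)+1) ≤ f' p
      exact le_of_lt (by exact_mod_cast hn)
    · exact Set.mem_iUnion.2 ⟨0, Or.inr (subset_toMeasurable _ _ hp)⟩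

/-- **Gradient of the normalized log-likelihood.**
With `Z θ = ∫ exp (x θ p) dμ p` and `L θ = x θ p⋆ - log (Z θ)`, under a
dominated-derivative hypothesis the log-likelihood is differentiable at `θ₀`
with derivative `∂x/∂θ(θ₀, p⋆) - ∫ ∂x/∂θ(θ₀, p) · q̂ p dμ p`, where
`q̂ p = exp (x θ₀ p) / Z θ₀`. -/
theorem grad_log_likelihood
    {P : Type*} [MeasurableSpace P] (μ : Measure P)
    (x x' : ℝ → P → ℝ) (pstar : P) (θ₀ ε : ℝ) (hε : 0 < ε)
    (hint : ∀ θ ∈ Metric.ball θ₀ ε, Integrable (fun p => Real.exp (x θ p)) μ)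
    (hderiv : ∀ᵐ p ∂μ, ∀ θ ∈ Metric.ball θ₀ ε,
      HasDerivAt (fun θ' => x θ' p) (x' θ p) θ)
    (g : P → ℝ) (hg : Integrable g μ)
    (hbound : ∀ θ ∈ Metric.ball θ₀ ε,
      ∀ᵐ p ∂μ, |x' θ p * Real.exp (x θ p)| ≤ g p)
    (hmeas : AEStronglyMeasurable (fun p => x' θ₀ p * Real.exp (x θ₀ p)) μ)
    (hZ : 0 < ∫ p, Real.exp (x θ₀ p) ∂μ)
    (hstar : HasDerivAt (fun θ => x θ pstar) (x' θ₀ pstar) θ₀) :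
    HasDerivAt (fun θ => x θ pstar - Real.log (∫ p, Real.exp (x θ p) ∂μ))
      (x' θ₀ pstar -
        ∫ p, x' θ₀ p * (Real.exp (x θ₀ p) / (∫ q, Real.exp (x θ₀ q) ∂μ)) ∂μ)
      θ₀ := by
  classical
  haveI hμsf : SigmaFinite μ :=
    aux_sigmaFinite (hint θ₀ (Metric.mem_ball_self hε)) (fun p => Real.exp_pos _)
  set B : Set ℝ := Metric.ball θ₀ ε with hBdef
  set B' : Set ℝ := Metric.ball θ₀ (ε/2) with hB'def
  have hB'B : B' ⊆ B := Metric.ball_subset_ball (by linarith)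
  have hB'meas : MeasurableSet B' := measurableSet_ball
  set E : ℝ → P → ℝ := fun θ p => Real.exp (x θ p) with hEdef
  set d : ℝ → P → ℝ := fun θ p => x' θ p * Real.exp (x θ p) with hddef
  set ν : Measure ℝ := volume.restrict B' with hνdef
  set pp : Measure (ℝ × P) := ν.prod μ with hppdef
  -- measurable versions of E θ for each θ
  have hWex : ∀ θ : ℝ, ∃ w : P → ℝ, StronglyMeasurable w ∧ (θ ∈ B → E θ =ᵐ[μ] w) := by
    intro θ
    by_cases hθ : θ ∈ B
    · exact ⟨(hint θ hθ).aestronglyMeasurable.mk _,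
        (hint θ hθ).aestronglyMeasurable.stronglyMeasurable_mk,
        fun _ => (hint θ hθ).aestronglyMeasurable.ae_eq_mk⟩
    · exact ⟨fun _ => 0, stronglyMeasurable_const, fun h => absurd h hθ⟩
  choose W hWm hWeq using hWex
  -- grid maps
  have hgridnull : ∀ᵐ p ∂μ, ∀ k : ℤ, ∀ n : ℕ, ((k:ℝ)/(n+1)) ∈ B →
      W ((k:ℝ)/(n+1)) p = E ((k:ℝ)/(n+1)) p := by
    rw [ae_all_iff]
    intro k
    rw [ae_all_iff]
    intro n
    by_cases h : ((k:ℝ)/(n+1)) ∈ B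
    · filter_upwards [hWeq _ h] with p hp _ using hp.symm
    · filter_upwards with p h' using absurd h' h
  -- transfer of a.e. statements to the product
  have hsnd : ∀ {q : P → Prop}, (∀ᵐ p ∂μ, q p) → ∀ᵐ z : ℝ × P ∂pp, q z.2 := by
    intro q hq
    exact Measure.quasiMeasurePreserving_snd.ae hq
  have hfst : ∀ᵐ z : ℝ × P ∂pp, z.1 ∈ B' :=
    Measure.quasiMeasurePreserving_fst.ae (ae_restrict_mem hB'meas)
  -- grid approximations
  have hUmeas : ∀ c : ℤ, ∀ n : ℕ,
      Measurable fun z : ℝ × P => W (((⌊z.1 * (n+1)⌋ + c : ℤ):ℝ)/(n+1)) z.2 := by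
    intro c n
    have h1 : Measurable fun z : ℝ × P => (z.2, (⌊z.1 * (n+1)⌋ + c : ℤ)) :=
      measurable_snd.prodMk
        ((Int.measurable_floor.comp (measurable_fst.mul measurable_const)).add
          measurable_const)
    have h2 : Measurable fun q : P × ℤ => W (((q.2:ℤ):ℝ)/(n+1)) q.1 :=
      measurable_from_prod_countable_left fun k => (hWm (((k:ℤ):ℝ)/(n+1))).measurable
    exact h2.comp h1
  -- floor grid converges to θ
  have hgrid_tendsto : ∀ c : ℤ, ∀ θ : ℝ,
      Tendsto (fun n : ℕ => ((⌊θ * (n+1)⌋ + c : ℤ):ℝ)/(n+1)) atTop (𝓝 θ) := by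
    intro c θ
    have hb : ∀ n : ℕ, |((⌊θ * (n+1)⌋ + c : ℤ):ℝ)/(n+1) - θ| ≤ (1 + |(c:ℝ)|)/(n+1) := by
      intro n
      have hn : (0:ℝ) < (n:ℝ)+1 := by positivity
      have h1 : (⌊θ * (n+1)⌋:ℝ) ≤ θ*(n+1) := Int.floor_le _
      have h2 : θ*(n+1) < (⌊θ * (n+1)⌋:ℝ) + 1 := Int.lt_floor_add_one _
      have heq : ((⌊θ * (n+1)⌋ + c : ℤ):ℝ)/(n+1) - θ
          = ((⌊θ * (n+1)⌋:ℝ) + (c:ℝ) - θ*((n:ℝ)+1))/((n:ℝ)+1) := by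
        field_simp
        push_cast
        ring
      rw [heq, abs_div, abs_of_pos hn]
      have hnum : |(⌊θ * (n+1)⌋:ℝ) + (c:ℝ) - θ*((n:ℝ)+1)| ≤ 1 + |(c:ℝ)| := by
        rw [abs_le]
        constructor <;> nlinarith [neg_abs_le (c:ℝ), le_abs_self (c:ℝ)]
      gcongr
    have h0 : Tendsto (fun n : ℕ => (1 + |(c:ℝ)|)/(n+1)) atTop (𝓝 0) := by
      apply Tendsto.div_atTop tendsto_const_nhds
      exact tendsto_atTop_add_const_right _ _ tendsto_natCast_atTop_atTop
    have h3 : Tendsto (fun n : ℕ => ((⌊θ * (n+1)⌋ + c : ℤ):ℝ)/(n+1) - θ) atTop (𝓝 0) :=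
      squeeze_zero_norm (fun n => by simpa [Real.norm_eq_abs] using hb n) h0
    simpa using h3.add_const θ
  -- eventually in the ball B
  have hgrid_mem : ∀ c : ℤ, ∀ θ ∈ B', ∀ᶠ n : ℕ in atTop,
      ((⌊θ * (n+1)⌋ + c : ℤ):ℝ)/(n+1) ∈ B := by
    intro c θ hθ
    have := (hgrid_tendsto c θ).eventually (Metric.ball_mem_nhds θ (show (0:ℝ) < ε/2 by linarith))
    filter_upwards [this] with n hn
    have h1 : dist (((⌊θ * (n+1)⌋ + c : ℤ):ℝ)/(n+1)) θ < ε/2 := hn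
    have h2 : dist θ θ₀ < ε/2 := hθ
    exact Metric.mem_ball.2 (lt_of_le_of_lt (dist_triangle _ θ θ₀) (by linarith))
  -- joint a.e.-measurability of E
  have hEmeas : AEMeasurable (fun z : ℝ × P => E z.1 z.2) pp := by
    refine aemeasurable_of_tendsto_metrizable_ae atTop
      (fun n => ((hUmeas 0 n).aemeasurable)) ?_
    filter_upwards [hfst, hsnd hgridnull, hsnd hderiv] with z hz1 hz2 hz3
    have hcont : ContinuousAt (fun θ => E θ z.2) z.1 := by
      have := (hz3 z.1 (hB'B hz1)).continuousAt
      exact (Real.continuous_exp.continuousAt).comp this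
    have h1 : Tendsto (fun n : ℕ => E (((⌊z.1 * (n+1)⌋ + 0 : ℤ):ℝ)/(n+1)) z.2) atTop
        (𝓝 (E z.1 z.2)) := hcont.tendsto.comp (hgrid_tendsto 0 z.1)
    refine h1.congr' ?_
    filter_upwards [hgrid_mem 0 z.1 hz1] with n hn
    exact (hz2 _ n hn).symm
  -- joint a.e.-measurability of d
  have hq : ∀ n : ℕ, ∀ θ : ℝ, θ < ((⌊θ * (n+1)⌋ + 1 : ℤ):ℝ)/(n+1) := by
    intro n θ
    have hn : (0:ℝ) < (n:ℝ)+1 := by positivity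
    rw [lt_div_iff₀ hn]
    have := Int.lt_floor_add_one (θ * ((n:ℝ)+1))
    push_cast
    linarith
  have hdmeas : AEMeasurable (fun z : ℝ × P => d z.1 z.2) pp := by
    have hdenom : ∀ n : ℕ, Measurable fun z : ℝ × P =>
        (((⌊z.1 * (n+1)⌋ + 1 : ℤ):ℝ)/(n+1) - z.1)⁻¹ := by
      intro n
      refine Measurable.inv (Measurable.sub ?_ measurable_fst)
      exact ((Measurable.of_discrete (f := fun k : ℤ => (k:ℝ))).comp
        ((Int.measurable_floor.comp
          (measurable_fst.mul measurable_const)).add measurable_const)).div measurable_const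
    refine aemeasurable_of_tendsto_metrizable_ae atTop
      (fun n => (((hUmeas 1 n).aemeasurable.sub hEmeas).mul (hdenom n).aemeasurable)) ?_
    filter_upwards [hfst, hsnd hgridnull, hsnd hderiv] with z hz1 hz2 hz3
    have hD : HasDerivAt (fun t => E t z.2) (Real.exp (x z.1 z.2) * x' z.1 z.2) z.1 :=
      (hz3 z.1 (hB'B hz1)).exp
    have hqt : Tendsto (fun n : ℕ => ((⌊z.1 * (n+1)⌋ + 1 : ℤ):ℝ)/(n+1)) atTop (𝓝[≠] z.1) := by
      rw [tendsto_nhdsWithin_iff]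
      exact ⟨hgrid_tendsto 1 z.1, Eventually.of_forall fun n => ne_of_gt (hq n z.1)⟩
    have hslope := (hasDerivAt_iff_tendsto_slope.1 hD).comp hqt
    have h1 : Tendsto (fun n : ℕ => (E (((⌊z.1 * (n+1)⌋ + 1 : ℤ):ℝ)/(n+1)) z.2 - E z.1 z.2)
        * ((((⌊z.1 * (n+1)⌋ + 1 : ℤ):ℝ)/(n+1)) - z.1)⁻¹) atTop
        (𝓝 (Real.exp (x z.1 z.2) * x' z.1 z.2)) := by
      refine hslope.congr fun n => ?_
      simp only [Function.comp_apply, slope_def_field]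
      rw [div_eq_mul_inv]
    have h2 : Tendsto (fun n : ℕ => (W (((⌊z.1 * (n+1)⌋ + 1 : ℤ):ℝ)/(n+1)) z.2 - E z.1 z.2)
        * ((((⌊z.1 * (n+1)⌋ + 1 : ℤ):ℝ)/(n+1)) - z.1)⁻¹) atTop
        (𝓝 (Real.exp (x z.1 z.2) * x' z.1 z.2)) := by
      refine h1.congr' ?_
      filter_upwards [hgrid_mem 1 z.1 hz1] with n hn
      rw [hz2 _ n hn]
    simpa [hddef, mul_comm] using h2
  -- the key bound swap: a.e. p, a.e. θ ∈ B', |d θ p| ≤ g p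
  have hswap : ∀ᵐ p ∂μ, ∀ᵐ θ ∂ν, |d θ p| ≤ g p := by
    have hgm : AEMeasurable g μ := hg.aemeasurable
    set dm : ℝ × P → ℝ := hdmeas.mk _ with hdmdef
    set gm : P → ℝ := hgm.mk g with hgmdef
    set S : Set (ℝ × P) := {z : ℝ × P | gm z.2 < |dm z|} with hSdef
    have hSmeas : MeasurableSet S :=
      measurableSet_lt (hgm.measurable_mk.comp measurable_snd) hdmeas.measurable_mk.abs
    set T : Set (ℝ × P) := toMeasurable pp {z : ℝ × P | d z.1 z.2 ≠ dm z} with hTdef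
    have hTmeas : MeasurableSet T := measurableSet_toMeasurable _ _
    have hT0 : pp {z : ℝ × P | d z.1 z.2 ≠ dm z} = 0 := by
      have := hdmeas.ae_eq_mk
      rw [Filter.EventuallyEq, ae_iff] at this
      exact this
    have hTnull : pp T = 0 := by rw [hTdef, measure_toMeasurable]; exact hT0
    -- slice statement for the deviation set
    have hdev : ∀ᵐ θ ∂ν, μ (Prod.mk θ ⁻¹' {z : ℝ × P | d z.1 z.2 ≠ dm z}) = 0 := by
      have := Measure.measure_ae_null_of_prod_null (μ := ν) (ν := μ) hT0
      filter_upwards [this] with θ hθ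
      exact hθ
    have hSnull : pp S = 0 := by
      rw [hppdef, Measure.measure_prod_null hSmeas]
      filter_upwards [hdev, ae_restrict_mem hB'meas] with θ h1 h2
      have h3 : ∀ᵐ p ∂μ, d θ p = dm (θ, p) := by
        rw [ae_iff]; exact h1
      have h4 : ∀ᵐ p ∂μ, |d θ p| ≤ g p := hbound θ (hB'B h2)
      have h5 : ∀ᵐ p ∂μ, p ∉ Prod.mk θ ⁻¹' S := by
        filter_upwards [h3, h4, hgm.ae_eq_mk] with p hp3 hp4 hp5
        show ¬ (gm p < |dm (θ, p)|)
        rw [← hp3]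
        exact not_lt.2 (le_of_le_of_eq hp4 hp5)
      show μ (Prod.mk θ ⁻¹' S) = 0
      rw [measure_eq_zero_iff_ae_notMem]
      exact h5
    have hSTnull : pp (S ∪ T) = 0 :=
      le_antisymm (le_trans (measure_union_le _ _) (by rw [hSnull, hTnull, add_zero]))
        zero_le
    have hswapped : (μ.prod ν) (Prod.swap ⁻¹' (S ∪ T)) = 0 := by
      rw [← Measure.map_apply measurable_swap (hSmeas.union hTmeas), Measure.prod_swap]
      exact hSTnull
    have hfinal := Measure.measure_ae_null_of_prod_null hswapped
    filter_upwards [hfinal, hgm.ae_eq_mk] with p h1 h2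
    have h3 : ∀ᵐ θ ∂ν, (θ, p) ∉ S ∪ T := by
      have hseteq : {θ : ℝ | ¬ ((θ, p) ∉ S ∪ T)} = Prod.mk p ⁻¹' (Prod.swap ⁻¹' (S ∪ T)) := by
        ext θ
        simp only [Set.mem_setOf_eq, not_not, Set.mem_preimage, Prod.swap_prod_mk,
          Set.mem_union]
      rw [ae_iff, hseteq]
      exact h1
    filter_upwards [h3] with θ hθ
    rw [Set.mem_union, not_or] at hθ
    have hd_eq : d θ p = dm (θ, p) := by
      by_contra hne
      exact hθ.2 (subset_toMeasurable _ _ hne)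
    have hS' : ¬ (gm p < |dm (θ, p)|) := hθ.1
    rw [hd_eq]
    exact le_of_le_of_eq (not_lt.1 hS') h2.symm
  -- Lipschitz property
  have hlip : ∀ᵐ p ∂μ, LipschitzOnWith (Real.nnabs (g p)) (fun θ => E θ p) B' := by
    filter_upwards [hderiv, hswap] with p hp1 hp2
    have hf' : ∀ θ ∈ B, HasDerivAt (fun t => E t p) (d θ p) θ := fun θ hθ => by
      simpa [hddef, hEdef, mul_comm] using (hp1 θ hθ).exp
    have hfc : ∀ θ ∈ B, ContinuousAt (fun t => E t p) θ := fun θ hθ =>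
      (hf' θ hθ).continuousAt
    rw [lipschitzOnWith_iff_dist_le_mul]
    intro a ha b hb
    have hsub : Set.uIcc a b ⊆ B' := ((convex_ball θ₀ (ε/2)).ordConnected).uIcc_subset ha hb
    have hsubB : Set.uIcc a b ⊆ B := fun t ht => hB'B (hsub ht)
    -- a.e. bound on the interval
    have hIsub : Set.uIoc a b ⊆ B' := fun t ht => hsub (Set.uIoc_subset_uIcc ht)
    have hd_ae : ∀ᵐ θ ∂volume.restrict (Set.uIoc a b), |d θ p| ≤ g p := by
      refine ae_mono (Measure.restrict_mono hIsub le_rfl) hp2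
    -- measurability of θ ↦ d θ p on the interval, via continuous difference quotients
    have hshift : ∀ n : ℕ, ∀ θ ∈ Set.uIcc a b, θ + (ε/4)/(n+1) ∈ B := by
      intro n θ hθ
      have h1 : dist θ θ₀ < ε/2 := hsub hθ
      have h2 : (0:ℝ) < (ε/4)/(n+1) := by positivity
      have h3 : (ε/4)/(n+1) ≤ ε/4 := by
        apply div_le_self (by linarith)
        simp [le_add_iff_nonneg_left]
      rw [Metric.mem_ball]
      rw [Real.dist_eq] at h1 ⊢
      rw [abs_lt] at h1 ⊢
      constructor <;> [linarith; linarith]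
    have hd_meas : AEMeasurable (fun θ => d θ p) (volume.restrict (Set.uIoc a b)) := by
      refine aemeasurable_of_tendsto_metrizable_ae atTop (f := fun (n : ℕ) θ =>
        (E (θ + (ε/4)/(n+1)) p - E θ p) / ((ε/4)/(n+1))) (fun n => ?_) ?_
      · refine (ContinuousOn.aemeasurable ?_ measurableSet_uIcc).mono_measure
          (Measure.restrict_mono Set.uIoc_subset_uIcc le_rfl)
        intro θ hθ
        refine ContinuousWithinAt.div ?_ continuousWithinAt_const (by positivity)
        have hc1 : ContinuousAt (fun t : ℝ => E (t + (ε/4)/(n+1)) p) θ :=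
          (differentiableAt_comp_add_const.2
            ((hf' _ (hshift n θ hθ)).differentiableAt)).continuousAt
        exact hc1.continuousWithinAt.sub ((hfc θ (hsubB hθ)).continuousWithinAt)
      · filter_upwards [ae_restrict_mem measurableSet_uIoc] with θ hθ
        have hD := hf' θ (hsubB (Set.uIoc_subset_uIcc hθ))
        have hqt : Tendsto (fun n : ℕ => θ + (ε/4)/(n+1)) atTop (𝓝[≠] θ) := by
          rw [tendsto_nhdsWithin_iff]
          constructor
          · have h0 : Tendsto (fun n : ℕ => (ε/4)/(n+1)) atTop (𝓝 0) := by
              apply Tendsto.div_atTop tendsto_const_nhds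
              exact tendsto_atTop_add_const_right _ _ tendsto_natCast_atTop_atTop
            simpa using (tendsto_const_nhds (x := θ)).add h0
          · exact Eventually.of_forall fun n => by
              have : (0:ℝ) < (ε/4)/(n+1) := by positivity
              intro hcon
              simp only [Set.mem_compl_iff, Set.mem_singleton_iff] at hcon
              nlinarith [hcon]
        have hslope := (hasDerivAt_iff_tendsto_slope.1 hD).comp hqt
        refine hslope.congr fun n => ?_
        simp only [Function.comp_apply, slope_def_field, add_sub_cancel_left]
    -- interval integrability
    have hd_int : IntervalIntegrable (fun θ => d θ p) volume a b := by
      refine IntervalIntegrable.mono_fun' (g := fun _ => |g p|)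
        intervalIntegrable_const hd_meas.aestronglyMeasurable ?_
      filter_upwards [hd_ae] with θ hθ
      simpa [Real.norm_eq_abs] using hθ.trans (le_abs_self _)
    -- FTC
    have hftc := intervalIntegral.integral_eq_sub_of_hasDerivAt
      (f := fun t => E t p) (f' := fun θ => d θ p)
      (fun θ hθ => hf' θ (hsubB hθ)) hd_int
    have hb1 : ‖∫ θ in a..b, d θ p‖ ≤ abs (∫ θ in a..b, abs (g p)) := by
      have h := intervalIntegral.norm_integral_le_of_norm_le_const_ae (a := a) (b := b)
        (C := |g p|) (f := fun θ => d θ p) ?_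
      · rw [intervalIntegral.integral_const, smul_eq_mul, abs_mul, abs_abs, mul_comm]
        exact h
      · filter_upwards [(ae_restrict_iff' measurableSet_uIoc).1 hd_ae] with θ hθ hmem
        simpa [Real.norm_eq_abs] using (hθ hmem).trans (le_abs_self _)
    rw [dist_eq_norm]
    have hEab : ‖E a p - E b p‖ = ‖∫ θ in a..b, d θ p‖ := by
      rw [hftc]
      exact (norm_sub_rev (E b p) (E a p)).symm
    calc ‖E a p - E b p‖ = ‖∫ θ in a..b, d θ p‖ := hEab
      _ ≤ abs (∫ θ in a..b, abs (g p)) := hb1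
      _ = abs ((b - a) * abs (g p)) := by rw [intervalIntegral.integral_const, smul_eq_mul]
      _ = abs (g p) * abs (b - a) := by rw [abs_mul, abs_abs, mul_comm]
      _ = (Real.nnabs (g p) : ℝ) * dist a b := by
          rw [Real.coe_nnabs, Real.dist_eq, abs_sub_comm]
  -- differentiate under the integral sign
  have hmain := hasDerivAt_integral_of_dominated_loc_of_lip
    (F := fun θ p => E θ p) (F' := fun p => d θ₀ p) (μ := μ) (x₀ := θ₀)
    (bound := g) (Metric.ball_mem_nhds θ₀ (show (0:ℝ) < ε/2 by linarith)) ?_ (hint θ₀ (Metric.mem_ball_self hε))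
    hmeas hlip hg ?_
  · obtain ⟨hint', hZd⟩ := hmain
    have hlog := hZd.log (ne_of_gt hZ)
    have hfinal := hstar.sub hlog
    have heq : (∫ p, x' θ₀ p * (Real.exp (x θ₀ p) / (∫ q, Real.exp (x θ₀ q) ∂μ)) ∂μ)
        = (∫ p, d θ₀ p ∂μ) / (∫ q, Real.exp (x θ₀ q) ∂μ) := by
      rw [← integral_div]
      congr 1
      funext p
      rw [hddef]
      ring
    rw [heq]
    exact hfinal
  · filter_upwards [Metric.ball_mem_nhds θ₀ hε] with θ hθ
    exact (hint θ hθ).aestronglyMeasurable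
  · filter_upwards [hderiv] with p hp
    have := (hp θ₀ (Metric.mem_ball_self hε)).exp
    simpa [hddef, hEdef, mul_comm] using this
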